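/- Let 0 < c < 1 and fix c. Define f(x) = ln(1 - arccos(x)/π) for x ∈ (0, 1) and ρ(x) = f(x)/f(cx). Then ρ is strictly decreasing on (0, 1). -/

import Mathlib

open Real Set

/-- `B s = s * sin (π s) * log s` is strictly monotone on `(1/2, 1)`. -/
private lemma Bmono : StrictMonoOn (fun s : ℝ => s * Real.sin (π * s) * Real.log s)
    (Ioo (1/2 : ℝ) 1) := by
  have hd : ∀ s ∈ Ioo (1/2:ℝ) 1, HasDerivAt (fun s : ℝ => s * Real.sin (π * s) * Real.log s)
      (Real.sin (π * s) * (1 + Real.log s) + π * s * Real.cos (π * s) * Real.log s) s := by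
    intro s hs
    have hs0 : (0:ℝ) < s := lt_trans (by norm_num) hs.1
    have h1 : HasDerivAt (fun y : ℝ => Real.sin (π * y)) (Real.cos (π * s) * (π * 1)) s :=
      (Real.hasDerivAt_sin (π * s)).comp s ((hasDerivAt_id s).const_mul π)
    have h2 := ((hasDerivAt_id s).mul h1).mul (Real.hasDerivAt_log hs0.ne')
    refine h2.congr_deriv ?_
    simp only [Pi.mul_apply, id]
    have hss : s * s⁻¹ = 1 := mul_inv_cancel₀ hs0.ne'
    linear_combination (Real.sin (π * s)) * hss
  apply strictMonoOn_of_deriv_pos (convex_Ioo _ _)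
  · intro s hs
    exact ((hd s hs).differentiableAt).continuousAt.continuousWithinAt
  · rw [interior_Ioo]
    intro s hs
    rw [(hd s hs).deriv]
    have hs0 : (0:ℝ) < s := lt_trans (by norm_num) hs.1
    have hpi := Real.pi_pos
    have hsin : 0 < Real.sin (π * s) :=
      Real.sin_pos_of_pos_of_lt_pi (by positivity) (by nlinarith [hs.2])
    have hcos : Real.cos (π * s) < 0 := by
      apply Real.cos_neg_of_pi_div_two_lt_of_lt
      · nlinarith [hs.1]
      · nlinarith [hs.2]
    have hlog : Real.log s < 0 := Real.log_neg hs0 hs.2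
    have hlog1 : -1 < Real.log s := by
      have h2 : Real.log (1/2 : ℝ) < Real.log s := Real.log_lt_log (by norm_num) hs.1
      have hl2 := Real.log_two_lt_d9
      rw [show (1/2:ℝ) = 2⁻¹ by norm_num, Real.log_inv] at h2
      linarith
    have h1 : 0 < Real.sin (π * s) * (1 + Real.log s) := mul_pos hsin (by linarith)
    have h2 : 0 < π * s * Real.cos (π * s) * Real.log s := by
      have h3 := mul_pos_of_neg_of_neg hcos hlog
      nlinarith [mul_pos (mul_pos hpi hs0) h3]
    linarith

private lemma ufacts {y : ℝ} (hy : y ∈ Ioo (0:ℝ) 1) :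
    1/2 < 1 - Real.arccos y / π ∧ 1 - Real.arccos y / π < 1 ∧
    Real.sin (π * (1 - Real.arccos y / π)) = Real.sqrt (1 - y^2) ∧
    Real.log (1 - Real.arccos y / π) < 0 := by
  have hpi := Real.pi_pos
  have h1 : Real.arccos y < π / 2 := Real.arccos_lt_pi_div_two.2 hy.1
  have h2 : 0 < Real.arccos y := Real.arccos_pos.2 hy.2
  have ht1 : 1/2 < 1 - Real.arccos y / π := by
    have h3 : Real.arccos y / π < 1/2 := by
      rw [div_lt_iff₀ hpi]; linarith
    linarith
  have ht2 : 1 - Real.arccos y / π < 1 := by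
    have : 0 < Real.arccos y / π := div_pos h2 hpi
    linarith
  refine ⟨ht1, ht2, ?_, Real.log_neg (by linarith) ht2⟩
  have h3 : π * (1 - Real.arccos y / π) = π - Real.arccos y := by
    field_simp
  rw [h3, Real.sin_pi_sub, Real.sin_arccos]

private lemma L_hasDeriv {y : ℝ} (hy : y ∈ Ioo (0:ℝ) 1) :
    HasDerivAt (fun z : ℝ => Real.log (Real.log (1 - Real.arccos z / π)))
      (1 / Real.sqrt (1 - y^2) / π / (1 - Real.arccos y / π) /
        Real.log (1 - Real.arccos y / π)) y := by
  obtain ⟨ht1, _, _, hlog⟩ := ufacts hy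
  have h₁ : y ≠ -1 := by intro h; rw [h] at hy; exact absurd hy.1 (by norm_num)
  have h₂ : y ≠ 1 := ne_of_lt hy.2
  have hu : HasDerivAt (fun z : ℝ => 1 - Real.arccos z / π)
      (-(-(1 / Real.sqrt (1 - y^2)) / π)) y :=
    ((Real.hasDerivAt_arccos h₁ h₂).div_const π).const_sub 1
  have h := (hu.log (by linarith : (1 - Real.arccos y / π) ≠ 0)).log hlog.ne
  convert h using 1
  ring

theorem simpleLSH_rho_strictAnti (c : ℝ) (hc0 : 0 < c) (hc1 : c < 1) :
    StrictAntiOn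
      (fun x : ℝ =>
        Real.log (1 - Real.arccos x / π) / Real.log (1 - Real.arccos (c * x) / π))
      (Ioo (0 : ℝ) 1) := by
  have hpi := Real.pi_pos
  have hmem : ∀ x ∈ Ioo (0:ℝ) 1, c * x ∈ Ioo (0:ℝ) 1 := by
    intro x hx
    constructor
    · exact mul_pos hc0 hx.1
    · nlinarith [hx.1, hx.2]
  -- H is strictly antitone
  have key : StrictAntiOn (fun x : ℝ => Real.log (Real.log (1 - Real.arccos x / π))
      - Real.log (Real.log (1 - Real.arccos (c*x) / π))) (Ioo (0:ℝ) 1) := by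
    have hd : ∀ x ∈ Ioo (0:ℝ) 1, HasDerivAt
        (fun x : ℝ => Real.log (Real.log (1 - Real.arccos x / π))
          - Real.log (Real.log (1 - Real.arccos (c*x) / π)))
        (1 / Real.sqrt (1 - x^2) / π / (1 - Real.arccos x / π) /
            Real.log (1 - Real.arccos x / π)
          - 1 / Real.sqrt (1 - (c*x)^2) / π / (1 - Real.arccos (c*x) / π) /
            Real.log (1 - Real.arccos (c*x) / π) * (c * 1)) x := by
      intro x hx
      have hL1 := L_hasDeriv hx
      have hL2 := L_hasDeriv (hmem x hx)
      have hc : HasDerivAt (fun x : ℝ => c * x) (c * 1) x := (hasDerivAt_id x).const_mul c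
      have h2 := hL2.comp x hc
      exact hL1.sub h2
    apply strictAntiOn_of_deriv_neg (convex_Ioo _ _)
    · intro x hx
      exact ((hd x hx).differentiableAt).continuousAt.continuousWithinAt
    · rw [interior_Ioo]
      intro x hx
      rw [(hd x hx).deriv]
      obtain ⟨ht1, ht2, hts, htl⟩ := ufacts hx
      obtain ⟨hr1, hr2, hrs, hrl⟩ := ufacts (hmem x hx)
      set t := 1 - Real.arccos x / π with htdef
      set r := 1 - Real.arccos (c*x) / π with hrdef
      clear_value t r
      have ht0 : (0:ℝ) < t := by linarith
      have hr0 : (0:ℝ) < r := by linarith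
      have hsint : 0 < Real.sin (π * t) := by
        rw [hts]; exact Real.sqrt_pos.2 (by nlinarith [hx.1, hx.2])
      have hsinr : 0 < Real.sin (π * r) := by
        rw [hrs]
        have hcx := hmem x hx
        exact Real.sqrt_pos.2 (by nlinarith [hcx.1, hcx.2])
      -- r < t
      have hrt : r < t := by
        have hax : Real.arccos x < Real.arccos (c * x) := by
          apply Real.strictAntiOn_arccos
          · exact ⟨by nlinarith [hx.1, hx.2], le_of_lt (hmem x hx).2⟩
          · exact ⟨by linarith [hx.1], le_of_lt hx.2⟩
          · nlinarith [hx.1]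
        have : Real.arccos x / π < Real.arccos (c * x) / π := by gcongr
        rw [htdef, hrdef]; linarith
      -- B inequality
      have hBrt : r * Real.sin (π * r) * Real.log r < t * Real.sin (π * t) * Real.log t :=
        Bmono ⟨hr1, hr2⟩ ⟨ht1, ht2⟩ hrt
      have hBt : t * Real.sin (π * t) * Real.log t < 0 :=
        mul_neg_of_pos_of_neg (mul_pos ht0 hsint) htl
      have hBr : r * Real.sin (π * r) * Real.log r < 0 :=
        mul_neg_of_pos_of_neg (mul_pos hr0 hsinr) hrl
      have hkey : r * Real.sin (π * r) * Real.log r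
          < c * (t * Real.sin (π * t) * Real.log t) := by
        have h3 : 0 < (c - 1) * (t * Real.sin (π * t) * Real.log t) :=
          mul_pos_of_neg_of_neg (by linarith) hBt
        nlinarith
      -- rewrite sqrt's as sines
      have hsq1 : Real.sqrt (1 - x^2) = Real.sin (π * t) := hts.symm
      have hsq2 : Real.sqrt (1 - (c*x)^2) = Real.sin (π * r) := hrs.symm
      rw [hsq1, hsq2]
      have heq : 1 / Real.sin (π * t) / π / t / Real.log t
            - 1 / Real.sin (π * r) / π / r / Real.log r * (c * 1)
          = ((r * Real.sin (π * r) * Real.log r)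
              - c * (t * Real.sin (π * t) * Real.log t))
            / (π * ((t * Real.sin (π * t) * Real.log t)
              * (r * Real.sin (π * r) * Real.log r))) := by
        field_simp [hsint.ne', hsinr.ne', ht0.ne', hr0.ne', htl.ne, hrl.ne, Real.pi_ne_zero]
      rw [heq]
      apply div_neg_of_neg_of_pos
      · linarith
      · exact mul_pos hpi (mul_pos_of_neg_of_neg hBt hBr)
  -- conclude
  intro a ha b hb hab
  have hH := key ha hb hab
  have hval : ∀ y ∈ Ioo (0:ℝ) 1,
      Real.exp (Real.log (Real.log (1 - Real.arccos y / π))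
        - Real.log (Real.log (1 - Real.arccos (c*y) / π)))
      = Real.log (1 - Real.arccos y / π) / Real.log (1 - Real.arccos (c*y) / π) := by
    intro y hy
    obtain ⟨_, _, _, h1⟩ := ufacts hy
    obtain ⟨_, _, _, h2⟩ := ufacts (hmem y hy)
    rw [← Real.log_neg_eq_log (Real.log (1 - Real.arccos y / π)),
      ← Real.log_neg_eq_log (Real.log (1 - Real.arccos (c*y) / π)),
      Real.exp_sub, Real.exp_log (by linarith), Real.exp_log (by linarith),
      neg_div_neg_eq]
  have hea := hval a ha
  have heb := hval b hb
  simp only []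
  rw [← hea, ← heb]
  exact Real.exp_lt_exp.2 hH
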